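/- The reduct of M to the language L₀ = {E_n : n ≥ 1} is a countable ultrahomogeneous L₀-structure whose age is K₀; hence this reduct is isomorphic to M₀, i.e., M is an expansion of M₀. -/

import Mathlib

open FirstOrder Language Structure CategoryTheory

/-- The language `L₀` with a `2n`-ary relation symbol `E_n` for each `n ≥ 1`. -/
def L₀ : FirstOrder.Language where
  Functions := fun _ => Empty
  Relations := fun k => {n : ℕ // 0 < n ∧ k = n + n}

/-- The relation symbol `E_n`. -/
def Esymb (n : ℕ) (hn : 0 < n) : L₀.Relations (n + n) := ⟨n, hn, rfl⟩

/-- `E_n(x̄, ȳ)` in an `L₀`-structure. -/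
def ERel (M : Type*) [L₀.Structure M] (n : ℕ) (hn : 0 < n) (x y : Fin n → M) : Prop :=
  Structure.RelMap (Esymb n hn) (Fin.append x y)

/-- The defining conditions for membership in `K₀`: each `E_n` holds only on pairs of
injective `n`-tuples, is invariant under permuting the entries of each tuple separately,
and induces an equivalence relation on `n`-element subsets. -/
def IsK0Struct (C : Type*) [L₀.Structure C] : Prop :=
  ∀ (n : ℕ) (hn : 0 < n),
    (∀ x y : Fin n → C, ERel C n hn x y → Function.Injective x ∧ Function.Injective y) ∧
    (∀ (x y : Fin n → C) (σ τ : Equiv.Perm (Fin n)),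
        ERel C n hn x y → ERel C n hn (x ∘ σ) (y ∘ τ)) ∧
    (∀ x : Fin n → C, Function.Injective x → ERel C n hn x x) ∧
    (∀ x y : Fin n → C, ERel C n hn x y → ERel C n hn y x) ∧
    (∀ x y z : Fin n → C, ERel C n hn x y → ERel C n hn y z → ERel C n hn x z)

/-- The class `K₀` of finite `L₀`-structures as above. -/
def K₀ : Set (Bundled L₀.Structure) := {C | Finite C ∧ IsK0Struct C}

/-- The language `L_P`: a `2n`-ary symbol `E_n` for each `n ≥ 1` and a `2n`-ary symbol
`<_n` for each `n ∈ P`. -/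
def LP (P : Set ℕ) : FirstOrder.Language where
  Functions := fun _ => Empty
  Relations := fun k => {n : ℕ // 0 < n ∧ k = n + n} ⊕ {n : ℕ // n ∈ P ∧ k = n + n}

/-- The symbol `E_n` of `L_P`. -/
def EsymbP (P : Set ℕ) (n : ℕ) (hn : 0 < n) : (LP P).Relations (n + n) :=
  Sum.inl ⟨n, hn, rfl⟩

/-- The symbol `<_n` of `L_P`. -/
def LTsymbP (P : Set ℕ) (n : ℕ) (hn : n ∈ P) : (LP P).Relations (n + n) :=
  Sum.inr ⟨n, hn, rfl⟩

/-- `E_n(x̄, ȳ)` in an `L_P`-structure. -/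
def ERelP (P : Set ℕ) (M : Type*) [i : (LP P).Structure M] (n : ℕ) (hn : 0 < n)
    (x y : Fin n → M) : Prop :=
  @Structure.RelMap (LP P) M i (n + n) (EsymbP P n hn) (Fin.append x y)

/-- `x̄ <_n ȳ` in an `L_P`-structure. -/
def LTRelP (P : Set ℕ) (M : Type*) [i : (LP P).Structure M] (n : ℕ) (hn : n ∈ P)
    (x y : Fin n → M) : Prop :=
  @Structure.RelMap (LP P) M i (n + n) (LTsymbP P n hn) (Fin.append x y)

/-- The defining conditions for membership in `K_P`: the `{E_n}`-part satisfies the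
`K₀`-conditions, and for `n ∈ P` the relation `<_n` holds only on injective tuples, is
`E_n`-invariant, and induces a strict linear order on `E_n`-classes. -/
def IsKPStruct (P : Set ℕ) (C : Type*) [(LP P).Structure C] : Prop :=
  (∀ (n : ℕ) (hn : 0 < n),
    (∀ x y : Fin n → C, ERelP P C n hn x y → Function.Injective x ∧ Function.Injective y) ∧
    (∀ (x y : Fin n → C) (σ τ : Equiv.Perm (Fin n)),
        ERelP P C n hn x y → ERelP P C n hn (x ∘ σ) (y ∘ τ)) ∧
    (∀ x : Fin n → C, Function.Injective x → ERelP P C n hn x x) ∧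
    (∀ x y : Fin n → C, ERelP P C n hn x y → ERelP P C n hn y x) ∧
    (∀ x y z : Fin n → C, ERelP P C n hn x y → ERelP P C n hn y z → ERelP P C n hn x z)) ∧
  (∀ (n : ℕ) (hn : n ∈ P) (hn0 : 0 < n),
    (∀ x y : Fin n → C, LTRelP P C n hn x y → Function.Injective x ∧ Function.Injective y) ∧
    (∀ x x' y y' : Fin n → C, ERelP P C n hn0 x x' → ERelP P C n hn0 y y' →
        LTRelP P C n hn x y → LTRelP P C n hn x' y') ∧
    (∀ x y : Fin n → C, LTRelP P C n hn x y → ¬ ERelP P C n hn0 x y) ∧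
    (∀ x y z : Fin n → C, LTRelP P C n hn x y → LTRelP P C n hn y z → LTRelP P C n hn x z) ∧
    (∀ x y : Fin n → C, Function.Injective x → Function.Injective y →
        ¬ ERelP P C n hn0 x y → LTRelP P C n hn x y ∨ LTRelP P C n hn y x))

/-- The class `K_P` of finite `L_P`-structures as above. -/
def KP (P : Set ℕ) : Set (Bundled (LP P).Structure) := {C | Finite C ∧ IsKPStruct P C}

/-- The inclusion of `L₀` into `L_P`. -/
def phiP (P : Set ℕ) : L₀ →ᴸ LP P where
  onFunction := fun _ e => e
  onRelation := fun _ r => Sum.inl r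


section Helpers

variable {P : Set ℕ}

lemma natAdd_addNat {n : ℕ} (i : Fin n) : Fin.natAdd n i = i.addNat n := by
  apply Fin.ext; simp [Nat.add_comm]

lemma comp_append {α β : Type*} {n : ℕ} (f : α → β) (x y : Fin n → α) :
    f ∘ Fin.append x y = Fin.append (f ∘ x) (f ∘ y) := by
  funext j
  refine Fin.addCases (fun i => ?_) (fun i => ?_) j <;>
    simp only [Fin.append_left, Fin.append_right, Function.comp_apply]

lemma append_halves {α : Type*} {n : ℕ} (v : Fin (n + n) → α) :
    Fin.append (v ∘ Fin.castAdd n) (v ∘ Fin.natAdd n) = v := by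
  funext j
  refine Fin.addCases (fun i => ?_) (fun i => ?_) j <;>
    simp only [Fin.append_left, Fin.append_right, Function.comp_apply]

def subOf (L : FirstOrder.Language) (hF : ∀ n, IsEmpty (L.Functions n)) {M : Type*}
    [L.Structure M] (s : Set M) : L.Substructure M where
  carrier := s
  fun_mem := fun {n} f => ((hF n).false f).elim

lemma finite_of_substructure_fg {L : FirstOrder.Language} (hF : ∀ n, IsEmpty (L.Functions n))
    {M : Type*} [L.Structure M] {S : L.Substructure M} (h : S.FG) : (S : Set M).Finite := by
  obtain ⟨t, ht⟩ := h
  have hle : S ≤ subOf L hF (t : Set M) := by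
    rw [← ht]
    exact (Substructure.closure_le (S := subOf L hF (t : Set M))).2 subset_rfl
  exact t.finite_toSet.subset hle

lemma structure_fg_of_finite (L : FirstOrder.Language) (M : Type*) [L.Structure M] [Finite M] :
    Structure.FG L M := by
  refine ⟨Set.Finite.toFinset Set.finite_univ, ?_⟩
  rw [Set.Finite.coe_toFinset]
  exact eq_top_iff.2 (fun x _ => Substructure.subset_closure (Set.mem_univ x))

lemma Emb_ERel {M N : Type*} [L₀.Structure M] [L₀.Structure N] (e : M ↪[L₀] N)
    {n : ℕ} (hn : 0 < n) (x y : Fin n → M) :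
    ERel N n hn (e ∘ x) (e ∘ y) ↔ ERel M n hn x y := by
  rw [ERel, ERel, ← comp_append]; exact e.map_rel' _ _

lemma Emb_ERelP {M N : Type*} [(LP P).Structure M] [(LP P).Structure N] (e : M ↪[LP P] N)
    {n : ℕ} (hn : 0 < n) (x y : Fin n → M) :
    ERelP P N n hn (e ∘ x) (e ∘ y) ↔ ERelP P M n hn x y := by
  rw [ERelP, ERelP, ← comp_append]; exact e.map_rel' _ _

lemma Emb_LTRelP {M N : Type*} [(LP P).Structure M] [(LP P).Structure N] (e : M ↪[LP P] N)
    {n : ℕ} (hn : n ∈ P) (x y : Fin n → M) :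
    LTRelP P N n hn (e ∘ x) (e ∘ y) ↔ LTRelP P M n hn x y := by
  rw [LTRelP, LTRelP, ← comp_append]; exact e.map_rel' _ _

lemma isK0_of_embedding {N M : Type*} [L₀.Structure N] [L₀.Structure M]
    (hM : IsK0Struct M) (e : N ↪[L₀] M) : IsK0Struct N := by
  intro n hn
  obtain ⟨h1, h2, h3, h4, h5⟩ := hM n hn
  have he := fun x y => (Emb_ERel e hn x y)
  refine ⟨fun x y h => ?_, fun x y σ τ h => ?_, fun x hx => ?_, fun x y h => (he y x).1 (h4 _ _ ((he x y).2 h)),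
    fun x y z hxy hyz => (he x z).1 (h5 _ _ _ ((he x y).2 hxy) ((he y z).2 hyz))⟩
  · obtain ⟨hx, hy⟩ := h1 _ _ ((he x y).2 h)
    exact ⟨hx.of_comp, hy.of_comp⟩
  · exact (he (x ∘ σ) (y ∘ τ)).1 (h2 _ _ σ τ ((he x y).2 h))
  · exact (he x x).1 (h3 _ (e.injective.comp hx))

lemma within {M : Type} [iM : (LP P).Structure M] (hage : (LP P).age M = KP P)
    {n : ℕ} (x y z w : Fin n → M) :
    ∃ (N : Type) (iN : (LP P).Structure N) (e : N ↪[LP P] M) (x' y' z' w' : Fin n → N),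
      IsKPStruct P N ∧ e ∘ x' = x ∧ e ∘ y' = y ∧ e ∘ z' = z ∧ e ∘ w' = w := by
  classical
  have hF : ∀ k, IsEmpty ((LP P).Functions k) := fun k => ⟨fun f => f.elim⟩
  have hsf : (Set.range x ∪ Set.range y ∪ Set.range z ∪ Set.range w).Finite :=
    (((Set.finite_range x).union (Set.finite_range y)).union (Set.finite_range z)).union
      (Set.finite_range w)
  set s : Set M := Set.range x ∪ Set.range y ∪ Set.range z ∪ Set.range w with hs
  let S := subOf (LP P) hF s
  have hfin : _root_.Finite (↥S) := hsf.to_subtype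
  have hmem : (Bundled.of (↥S) : Bundled (LP P).Structure) ∈ (LP P).age M :=
    ⟨@structure_fg_of_finite _ (↥S) _ hfin, ⟨S.subtype⟩⟩
  rw [hage] at hmem
  refine ⟨S, inferInstance, S.subtype,
    fun i => ⟨x i, Or.inl (Or.inl (Or.inl ⟨i, rfl⟩))⟩,
    fun i => ⟨y i, Or.inl (Or.inl (Or.inr ⟨i, rfl⟩))⟩,
    fun i => ⟨z i, Or.inl (Or.inr ⟨i, rfl⟩)⟩,
    fun i => ⟨w i, Or.inr ⟨i, rfl⟩⟩, hmem.2, rfl, rfl, rfl, rfl⟩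

lemma isKP_of_age {M : Type} [iM : (LP P).Structure M] (hage : (LP P).age M = KP P) :
    IsKPStruct P M := by
  constructor
  · intro n hn
    refine ⟨fun x y h => ?_, fun x y σ τ h => ?_, fun x hx => ?_, fun x y hxy => ?_,
      fun x y z hxy hyz => ?_⟩
    · obtain ⟨N, iN, e, x', y', -, -, hK, ex, ey, -, -⟩ := within hage x y y y
      subst ex; subst ey
      obtain ⟨hx, hy⟩ := ((hK.1 n hn).1 x' y' ((Emb_ERelP e hn x' y').1 h))
      exact ⟨e.injective.comp hx, e.injective.comp hy⟩
    · obtain ⟨N, iN, e, x', y', -, -, hK, ex, ey, -, -⟩ := within hage x y y y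
      subst ex; subst ey
      exact (Emb_ERelP e hn (x' ∘ σ) (y' ∘ τ)).2
        ((hK.1 n hn).2.1 x' y' σ τ ((Emb_ERelP e hn x' y').1 h))
    · obtain ⟨N, iN, e, x', y', -, -, hK, ex, -, -, -⟩ := within hage x x x x
      subst ex
      exact (Emb_ERelP e hn x' x').2 ((hK.1 n hn).2.2.1 x' (Function.Injective.of_comp hx))
    · obtain ⟨N, iN, e, x', y', -, -, hK, ex, ey, -, -⟩ := within hage x y y y
      subst ex; subst ey
      exact (Emb_ERelP e hn y' x').2 ((hK.1 n hn).2.2.2.1 x' y' ((Emb_ERelP e hn x' y').1 hxy))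
    · obtain ⟨N, iN, e, x', y', z', -, hK, ex, ey, ez, -⟩ := within hage x y z z
      subst ex; subst ey; subst ez
      exact (Emb_ERelP e hn x' z').2 ((hK.1 n hn).2.2.2.2 x' y' z'
        ((Emb_ERelP e hn x' y').1 hxy) ((Emb_ERelP e hn y' z').1 hyz))
  · intro n hnP hn0
    refine ⟨fun x y h => ?_, fun x x1 y y1 hxx hyy h => ?_, fun x y h => ?_,
      fun x y z hxy hyz => ?_, fun x y hx hy hne => ?_⟩
    · obtain ⟨N, iN, e, x', y', -, -, hK, ex, ey, -, -⟩ := within hage x y y y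
      subst ex; subst ey
      obtain ⟨hx, hy⟩ := ((hK.2 n hnP hn0).1 x' y' ((Emb_LTRelP e hnP x' y').1 h))
      exact ⟨e.injective.comp hx, e.injective.comp hy⟩
    · obtain ⟨N, iN, e, x', x1', y', y1', hK, ex, ex1, ey, ey1⟩ := within hage x x1 y y1
      subst ex; subst ex1; subst ey; subst ey1
      exact (Emb_LTRelP e hnP x1' y1').2 ((hK.2 n hnP hn0).2.1 x' x1' y' y1'
        ((Emb_ERelP e hn0 x' x1').1 hxx) ((Emb_ERelP e hn0 y' y1').1 hyy)
        ((Emb_LTRelP e hnP x' y').1 h))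
    · obtain ⟨N, iN, e, x', y', -, -, hK, ex, ey, -, -⟩ := within hage x y y y
      subst ex; subst ey
      intro hE
      exact (hK.2 n hnP hn0).2.2.1 x' y' ((Emb_LTRelP e hnP x' y').1 h)
        ((Emb_ERelP e hn0 x' y').1 hE)
    · obtain ⟨N, iN, e, x', y', z', -, hK, ex, ey, ez, -⟩ := within hage x y z z
      subst ex; subst ey; subst ez
      exact (Emb_LTRelP e hnP x' z').2 ((hK.2 n hnP hn0).2.2.2.1 x' y' z'
        ((Emb_LTRelP e hnP x' y').1 hxy) ((Emb_LTRelP e hnP y' z').1 hyz))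
    · obtain ⟨N, iN, e, x', y', -, -, hK, ex, ey, -, -⟩ := within hage x y y y
      subst ex; subst ey
      rcases (hK.2 n hnP hn0).2.2.2.2 x' y' (Function.Injective.of_comp hx)
        (Function.Injective.of_comp hy)
        (fun hE => hne ((Emb_ERelP e hn0 x' y').2 hE)) with h | h
      · exact Or.inl ((Emb_LTRelP e hnP x' y').2 h)
      · exact Or.inr ((Emb_LTRelP e hnP y' x').2 h)



lemma relmap_E_iff {X : Type*} [iX : L₀.Structure X] (m : ℕ) (hm0 : 0 < m)
    (v : Fin (m + m) → X) :
    Structure.RelMap (Esymb m hm0) v ↔ ERel X m hm0 (v ∘ Fin.castAdd m) (v ∘ Fin.natAdd m) := by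
  rw [ERel, append_halves]

lemma relmap_inl_iff {X : Type*} [iX : (LP P).Structure X] (m : ℕ) (hm0 : 0 < m)
    (v : Fin (m + m) → X) :
    Structure.RelMap (EsymbP P m hm0) v ↔
      ERelP P X m hm0 (v ∘ Fin.castAdd m) (v ∘ Fin.natAdd m) := by
  rw [ERelP, append_halves]

lemma relmap_inr_iff {X : Type*} [iX : (LP P).Structure X] (m : ℕ) (hm : m ∈ P)
    (v : Fin (m + m) → X) :
    Structure.RelMap (LTsymbP P m hm) v ↔
      LTRelP P X m hm (v ∘ Fin.castAdd m) (v ∘ Fin.natAdd m) := by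
  rw [LTRelP, append_halves]

lemma key_extension {M : Type} [iM : (LP P).Structure M] (hP0 : ∀ n ∈ P, 0 < n)
    (hage : (LP P).age M = KP P) (hUH : (LP P).IsUltrahomogeneous M)
    (T : Type) [iT : L₀.Structure T] (hTfin : Finite T) (hT : IsK0Struct T)
    (A : Type) [iA : L₀.Structure A] (hAfin : Finite A)
    (g : A ↪[L₀] T) (f : @Embedding L₀ A M iA ((phiP P).reduct M)) :
    ∃ f' : @Embedding L₀ T M iT ((phiP P).reduct M),
      f = @Embedding.comp L₀ A T iA iT M ((phiP P).reduct M) f' g := by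
  classical
  letI red : L₀.Structure M := (phiP P).reduct M
  have hMKP : IsKPStruct P M := isKP_of_age hage
  have hfE : ∀ (n : ℕ) (hn : 0 < n) (x y : Fin n → A),
      ERelP P M n hn (⇑f ∘ x) (⇑f ∘ y) ↔ ERel A n hn x y := fun n hn x y =>
    Emb_ERel f hn x y
  have hgE : ∀ (n : ℕ) (hn : 0 < n) (x y : Fin n → A),
      ERel T n hn (⇑g ∘ x) (⇑g ∘ y) ↔ ERel A n hn x y := fun n hn x y =>
    Emb_ERel g hn x y
  -- order extension on E-classes of T, compatible with the pulled-back orders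
  have hkey : ∀ (n : ℕ) (hn : n ∈ P),
      ∃ s' : {v : Fin n → T // Function.Injective v} → {v : Fin n → T // Function.Injective v}
        → Prop,
      (∀ a b c d, ERel T n (hP0 n hn) a.1 b.1 → ERel T n (hP0 n hn) c.1 d.1 →
        s' a c → s' b d) ∧
      (∀ a b, s' a b → ¬ ERel T n (hP0 n hn) a.1 b.1) ∧
      (∀ a b c, s' a b → s' b c → s' a c) ∧
      (∀ a b, ¬ ERel T n (hP0 n hn) a.1 b.1 → s' a b ∨ s' b a) ∧
      (∀ a b, (∃ u v : Fin n → A, ERel T n (hP0 n hn) a.1 (⇑g ∘ u) ∧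
          ERel T n (hP0 n hn) b.1 (⇑g ∘ v) ∧ LTRelP P M n hn (⇑f ∘ u) (⇑f ∘ v)) → s' a b) := by
    intro n hn
    have hn0 : 0 < n := hP0 n hn
    obtain ⟨t1, t2, t3, t4, t5⟩ := hT n hn0
    obtain ⟨m1, m2, m3, m4, m5⟩ := hMKP.1 n hn0
    obtain ⟨l1, l2, l3, l4, l5⟩ := hMKP.2 n hn hn0
    set In := {v : Fin n → T // Function.Injective v} with hIn
    let st : Setoid In := ⟨fun a b => ERel T n hn0 a.1 b.1,
      ⟨fun a => t3 a.1 a.2, fun h => t4 _ _ h, fun h h' => t5 _ _ _ h h'⟩⟩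
    let R : In → In → Prop := fun a b => ∃ u v : Fin n → A,
      ERel T n hn0 a.1 (⇑g ∘ u) ∧ ERel T n hn0 b.1 (⇑g ∘ v) ∧
        LTRelP P M n hn (⇑f ∘ u) (⇑f ∘ v)
    have hRinv : ∀ a a' b b' : In, ERel T n hn0 a.1 a'.1 → ERel T n hn0 b.1 b'.1 →
        R a b → R a' b' := by
      rintro a a' b b' ha hb ⟨u, v, hu, hv, hlt⟩
      exact ⟨u, v, t5 _ _ _ (t4 _ _ ha) hu, t5 _ _ _ (t4 _ _ hb) hv, hlt⟩
    have hRirr : ∀ a b : In, R a b → ¬ ERel T n hn0 a.1 b.1 := by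
      rintro a b ⟨u, v, hu, hv, hlt⟩ hE
      have huv : ERel T n hn0 (⇑g ∘ u) (⇑g ∘ v) :=
        t5 _ _ _ (t4 _ _ hu) (t5 _ _ _ hE hv)
      exact l3 _ _ hlt ((hfE n hn0 u v).2 ((hgE n hn0 u v).1 huv))
    have hRtrans : ∀ a b c : In, R a b → R b c → R a c := by
      rintro a b c ⟨u, v, hu, hv, hlt⟩ ⟨v', w, hv', hw, hlt'⟩
      have hvv' : ERel T n hn0 (⇑g ∘ v) (⇑g ∘ v') :=
        t5 _ _ _ (t4 _ _ hv) hv'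
      have hMvv' : ERelP P M n hn0 (⇑f ∘ v) (⇑f ∘ v') :=
        (hfE n hn0 v v').2 ((hgE n hn0 v v').1 hvv')
      have hfw : Function.Injective (⇑f ∘ w) := (l1 _ _ hlt').2
      have hlt2 : LTRelP P M n hn (⇑f ∘ v) (⇑f ∘ w) :=
        l2 _ _ _ _ (m4 _ _ hMvv') (m3 _ hfw) hlt'
      exact ⟨u, w, hu, hw, l4 _ _ _ hlt hlt2⟩
    let rq : Quotient st → Quotient st → Prop := Quotient.lift₂ R
      (fun a b a' b' ha hb => propext
        ⟨fun h => hRinv a a' b b' ha hb h, fun h => hRinv a' a b' b (t4 _ _ ha) (t4 _ _ hb) h⟩)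
    have hrq_irr : ∀ q, ¬ rq q q := by
      refine Quotient.ind (fun a h => ?_)
      exact hRirr a a h (t3 a.1 a.2)
    have hrq_trans : ∀ q r t, rq q r → rq r t → rq q t := by
      refine Quotient.ind fun a => Quotient.ind fun b => Quotient.ind fun c => ?_
      exact hRtrans a b c
    let pq : Quotient st → Quotient st → Prop := fun q r => q = r ∨ rq q r
    haveI hpq : IsPartialOrder (Quotient st) pq :=
      { refl := fun q => Or.inl rfl
        trans := fun q r t h1 h2 => by
          rcases h1 with rfl | h1
          · exact h2
          · rcases h2 with rfl | h2
            · exact Or.inr h1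
            · exact Or.inr (hrq_trans _ _ _ h1 h2)
        antisymm := fun q r h1 h2 => by
          rcases h1 with rfl | h1
          · rfl
          · rcases h2 with rfl | h2
            · rfl
            · exact absurd (hrq_trans _ _ _ h1 h2) (hrq_irr _) }
    obtain ⟨sL, hsL, hsub⟩ := extend_partialOrder pq
    haveI := hsL
    refine ⟨fun a b => sL (Quotient.mk st a) (Quotient.mk st b) ∧
      Quotient.mk st a ≠ Quotient.mk st b, ?_, ?_, ?_, ?_, ?_⟩
    · intro a b c d hab hcd h
      rwa [show Quotient.mk st b = Quotient.mk st a from (Quotient.sound hab).symm,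
        show Quotient.mk st d = Quotient.mk st c from (Quotient.sound hcd).symm]
    · intro a b h hE
      exact h.2 (Quotient.sound hE)
    · rintro a b c ⟨h1, h2⟩ ⟨h3, h4⟩
      refine ⟨IsTrans.trans _ _ _ h1 h3, fun hac => ?_⟩
      exact h2 (hac.trans (Std.Antisymm.antisymm _ _ h3 (hac ▸ h1)).symm)
    · intro a b hE
      have hne : Quotient.mk st a ≠ Quotient.mk st b := fun h => hE (Quotient.exact h)
      rcases Std.Total.total (r := sL) (Quotient.mk st a) (Quotient.mk st b) with h | h
      · exact Or.inl ⟨h, hne⟩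
      · exact Or.inr ⟨h, hne.symm⟩
    · intro a b hR
      have hrq : rq (Quotient.mk st a) (Quotient.mk st b) := hR
      refine ⟨hsub _ _ (Or.inr hrq), fun h => ?_⟩
      exact hRirr a b hR (Quotient.exact h)
  choose s' k1 k2 k3 k4 k5 using hkey
  -- the LP-structure on T
  letI instT : (LP P).Structure T := {
    funMap := fun {n} F _ => F.elim
    RelMap := fun {k} r v =>
      match r with
      | Sum.inl e => iT.RelMap e v
      | Sum.inr e => ∃ (a b : {v : Fin e.1 → T // Function.Injective v}),
          (∀ i : Fin k, v i = Fin.append a.1 b.1 (Fin.cast e.2.2 i)) ∧ s' e.1 e.2.1 a b }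
  have hET : ∀ (n : ℕ) (hn : 0 < n) (x y : Fin n → T),
      ERelP P T n hn x y ↔ ERel T n hn x y := fun _ _ _ _ => Iff.rfl
  have hLT : ∀ (n : ℕ) (hn : n ∈ P) (x y : Fin n → T),
      LTRelP P T n hn x y ↔
        ∃ (hx : Function.Injective x) (hy : Function.Injective y), s' n hn ⟨x, hx⟩ ⟨y, hy⟩ := by
    intro n hn x y
    constructor
    · rintro ⟨a, b, hv, hs⟩
      have hxy : Fin.append x y = Fin.append a.1 b.1 := funext fun i => hv i
      have hx : x = a.1 := funext fun j => by
        have h := congrFun hxy (Fin.castAdd n j)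
        simpa only [Fin.append_left] using h
      have hy : y = b.1 := funext fun j => by
        have h := congrFun hxy (Fin.natAdd n j)
        simpa only [Fin.append_right] using h
      subst hx; subst hy
      exact ⟨a.2, b.2, hs⟩
    · rintro ⟨hx, hy, hs⟩
      exact ⟨⟨x, hx⟩, ⟨y, hy⟩, fun i => rfl, hs⟩
  have hTKP : IsKPStruct P T := by
    constructor
    · intro n hn
      exact hT n hn
    · intro n hn hn0
      obtain ⟨t1, t2, t3, t4, t5⟩ := hT n hn0
      refine ⟨fun x y h => ?_, fun x x1 y y1 hxx hyy h => ?_, fun x y h hE => ?_,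
        fun x y z hxy hyz => ?_, fun x y hx hy hne => ?_⟩
      · obtain ⟨hx, hy, -⟩ := (hLT n hn x y).1 h
        exact ⟨hx, hy⟩
      · obtain ⟨hx, hy, hs⟩ := (hLT n hn x y).1 h
        have hx1 : Function.Injective x1 := (t1 _ _ hxx).2
        have hy1 : Function.Injective y1 := (t1 _ _ hyy).2
        exact (hLT n hn x1 y1).2 ⟨hx1, hy1,
          k1 n hn ⟨x, hx⟩ ⟨x1, hx1⟩ ⟨y, hy⟩ ⟨y1, hy1⟩ hxx hyy hs⟩
      · obtain ⟨hx, hy, hs⟩ := (hLT n hn x y).1 h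
        exact k2 n hn ⟨x, hx⟩ ⟨y, hy⟩ hs hE
      · obtain ⟨hx, hy, hs1⟩ := (hLT n hn x y).1 hxy
        obtain ⟨hy', hz, hs2⟩ := (hLT n hn y z).1 hyz
        exact (hLT n hn x z).2 ⟨hx, hz, k3 n hn ⟨x, hx⟩ ⟨y, hy⟩ ⟨z, hz⟩ hs1 hs2⟩
      · rcases k4 n hn ⟨x, hx⟩ ⟨y, hy⟩ hne with h | h
        · exact Or.inl ((hLT n hn x y).2 ⟨hx, hy, h⟩)
        · exact Or.inr ((hLT n hn y x).2 ⟨hy, hx, h⟩)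
  have hmem : (⟨T, instT⟩ : Bundled (LP P).Structure) ∈ KP P := ⟨hTfin, hTKP⟩
  rw [← hage] at hmem
  obtain ⟨-, ⟨e0⟩⟩ := hmem
  letI instA : (LP P).Structure A := {
    funMap := fun F _ => F.elim
    RelMap := fun {k} r v => Structure.RelMap (M := M) r (⇑f ∘ v) }
  have gmap : ∀ {k : ℕ} (r : (LP P).Relations k) (x : Fin k → A),
      @Structure.RelMap _ T instT k r (⇑g ∘ x) ↔ @Structure.RelMap _ A instA k r x := by
    intro k r x
    rcases r with e | e
    · obtain ⟨m, hm0, hk⟩ := e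
      subst hk
      have h1 := relmap_inl_iff (P := P) (X := T) (iX := instT) m hm0 (⇑g ∘ x)
      have h2 := relmap_inl_iff (P := P) (X := M) m hm0 (⇑f ∘ x)
      refine h1.trans (Iff.trans ?_ h2.symm)
      exact (hgE m hm0 (x ∘ Fin.castAdd m) (x ∘ Fin.natAdd m)).trans
        (hfE m hm0 (x ∘ Fin.castAdd m) (x ∘ Fin.natAdd m)).symm
    · obtain ⟨m, hmP, hk⟩ := e
      subst hk
      have hm0 : 0 < m := hP0 m hmP
      have h1 := relmap_inr_iff (P := P) (X := T) (iX := instT) m hmP (⇑g ∘ x)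
      have h2 := relmap_inr_iff (P := P) (X := M) m hmP (⇑f ∘ x)
      refine h1.trans (Iff.trans ?_ h2.symm)
      constructor
      · intro h
        obtain ⟨hgu, hgv, hs⟩ := (hLT m hmP _ _).1 h
        have hgu' : Function.Injective (⇑g ∘ (x ∘ Fin.castAdd m)) := hgu
        have hgv' : Function.Injective (⇑g ∘ (x ∘ Fin.natAdd m)) := hgv
        have hiu : Function.Injective (x ∘ Fin.castAdd m) := hgu'.of_comp
        have hiv : Function.Injective (x ∘ Fin.natAdd m) := hgv'.of_comp
        have hfu : Function.Injective (⇑f ∘ (x ∘ Fin.castAdd m)) := f.injective.comp hiu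
        have hfv : Function.Injective (⇑f ∘ (x ∘ Fin.natAdd m)) := f.injective.comp hiv
        have hnEA : ¬ ERel A m hm0 (x ∘ Fin.castAdd m) (x ∘ Fin.natAdd m) := by
          intro hE
          exact k2 m hmP _ _ hs ((hgE m hm0 _ _).2 hE)
        have hnEM : ¬ ERelP P M m hm0 (⇑f ∘ (x ∘ Fin.castAdd m)) (⇑f ∘ (x ∘ Fin.natAdd m)) :=
          fun hE => hnEA ((hfE m hm0 _ _).1 hE)
        rcases (hMKP.2 m hmP hm0).2.2.2.2 _ _ hfu hfv hnEM with h' | h'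
        · exact h'
        · exfalso
          have hgvR : s' m hmP ⟨⇑g ∘ (x ∘ Fin.natAdd m), hgv'⟩
              ⟨⇑g ∘ (x ∘ Fin.castAdd m), hgu'⟩ :=
            k5 m hmP _ _ ⟨x ∘ Fin.natAdd m, x ∘ Fin.castAdd m,
              (hT m hm0).2.2.1 _ hgv', (hT m hm0).2.2.1 _ hgu', h'⟩
          have hself : s' m hmP ⟨⇑g ∘ (x ∘ Fin.castAdd m), hgu'⟩
              ⟨⇑g ∘ (x ∘ Fin.castAdd m), hgu'⟩ :=
            k3 m hmP _ _ _ hs hgvR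
          exact k2 m hmP _ _ hself ((hT m hm0).2.2.1 _ hgu')
      · intro h
        have hfu : Function.Injective (⇑f ∘ (x ∘ Fin.castAdd m)) :=
          ((hMKP.2 m hmP hm0).1 _ _ h).1
        have hfv : Function.Injective (⇑f ∘ (x ∘ Fin.natAdd m)) :=
          ((hMKP.2 m hmP hm0).1 _ _ h).2
        have hiu : Function.Injective (x ∘ Fin.castAdd m) := hfu.of_comp
        have hiv : Function.Injective (x ∘ Fin.natAdd m) := hfv.of_comp
        have hgu' : Function.Injective (⇑g ∘ (x ∘ Fin.castAdd m)) := g.injective.comp hiu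
        have hgv' : Function.Injective (⇑g ∘ (x ∘ Fin.natAdd m)) := g.injective.comp hiv
        exact (hLT m hmP _ _).2 ⟨hgu', hgv',
          k5 m hmP _ _ ⟨x ∘ Fin.castAdd m, x ∘ Fin.natAdd m,
            (hT m hm0).2.2.1 _ hgu', (hT m hm0).2.2.1 _ hgv', h⟩⟩
  let fLP : @Embedding (LP P) A M instA iM := {
    toFun := ⇑f
    inj' := f.injective
    map_fun' := fun F _ => F.elim
    map_rel' := fun r x => Iff.rfl }
  let gLP : @Embedding (LP P) A T instA instT := {
    toFun := ⇑g
    inj' := g.injective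
    map_fun' := fun F _ => F.elim
    map_rel' := fun r x => gmap r x }
  haveI hNe : Nonempty (@Embedding (LP P) T M instT iM) := ⟨e0⟩
  haveI := hAfin
  have hAFG : @Structure.FG (LP P) A instA := structure_fg_of_finite _ _
  obtain ⟨fext, hfext⟩ := hUH.extend_embedding (S := A) (T := T) hAFG fLP gLP
  refine ⟨{ toFun := ⇑fext
            inj' := fext.injective
            map_fun' := fun F _ => F.elim
            map_rel' := fun {k} r x => fext.map_rel' (Sum.inl r) x }, ?_⟩
  ext a
  exact DFunLike.congr_fun hfext a

instance emptyL0Struct : L₀.Structure Empty where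
  funMap := fun F _ => F.elim
  RelMap := fun _ _ => False

lemma emptyK0 : IsK0Struct Empty := by
  intro n hn
  exact ⟨fun x => (x ⟨0, hn⟩).elim, fun x => (x ⟨0, hn⟩).elim, fun x => (x ⟨0, hn⟩).elim,
    fun x => (x ⟨0, hn⟩).elim, fun x => (x ⟨0, hn⟩).elim⟩

def emptyEmb (X : Type*) [iX : L₀.Structure X] : Empty ↪[L₀] X where
  toFun := fun e => e.elim
  inj' := fun a => a.elim
  map_fun' := fun F _ => F.elim
  map_rel' := fun {n} r v => by
    rcases n with _ | n
    · exact absurd r.2.2 (by have := r.2.1; omega)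
    · exact (v 0).elim

end Helpers

/-- the `L₀`-reduct of the Fraïssé limit `M` of `K_P` is a countable
ultrahomogeneous `L₀`-structure with age `K₀`, hence isomorphic to `M₀`; so `M` is an
expansion of `M₀`. -/
theorem KP_limit_reduct_is_M0 (P : Set ℕ) (hP : ∀ n ∈ P, 3 ≤ n)
    (M : Type) [(LP P).Structure M] [Countable M]
    (hUH : (LP P).IsUltrahomogeneous M) (hage : (LP P).age M = KP P)
    (M₀ : Type) [instM₀ : L₀.Structure M₀] [Countable M₀]
    (hUH₀ : L₀.IsUltrahomogeneous M₀) (hage₀ : L₀.age M₀ = K₀) :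
    @Language.IsUltrahomogeneous L₀ M ((phiP P).reduct M) ∧
    @Language.age L₀ M ((phiP P).reduct M) = K₀ ∧
    Nonempty (@Language.Equiv L₀ M M₀ ((phiP P).reduct M) instM₀) := by
  classical
  letI red : L₀.Structure M := (phiP P).reduct M
  have hP0 : ∀ n ∈ P, 0 < n := fun n hn => by have := hP n hn; omega
  have hF0 : ∀ k, IsEmpty (L₀.Functions k) := fun k => ⟨fun f => f.elim⟩
  have hMKP : IsKPStruct P M := isKP_of_age hage
  have hMK0 : IsK0Struct M := hMKP.1
  -- age of the reduct is K₀
  have hage0 : L₀.age M = K₀ := by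
    ext C
    constructor
    · rintro ⟨hFG, ⟨e⟩⟩
      have hfin : (((⊤ : L₀.Substructure C) : Set C)).Finite :=
        finite_of_substructure_fg hF0 (Structure.fg_def.1 hFG)
      rw [Substructure.coe_top] at hfin
      haveI : Finite C := Set.finite_univ_iff.1 hfin
      exact ⟨inferInstance, isK0_of_embedding hMK0 e⟩
    · rintro ⟨hfin, hC⟩
      obtain ⟨f', -⟩ := @key_extension P M _ hP0 hage hUH C C.str hfin hC Empty
        emptyL0Struct inferInstance (emptyEmb C) (emptyEmb M)
      haveI : Finite C := hfin
      exact ⟨structure_fg_of_finite L₀ C, ⟨f'⟩⟩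
  -- the reduct is ultrahomogeneous
  have hUH0 : L₀.IsUltrahomogeneous M := by
    rw [isUltrahomogeneous_iff_IsExtensionPair (Structure.cg_of_countable)]
    rintro ⟨fpe, hfg⟩ m
    let S := fpe.dom ⊔ Substructure.closure L₀ {m}
    have dom_le_S : fpe.dom ≤ S := le_sup_left
    have S_FG : S.FG := hfg.sup (Substructure.fg_closure_singleton _)
    have hSfin : (S : Set M).Finite := finite_of_substructure_fg hF0 S_FG
    haveI hfS : Finite (↥S) := hSfin.to_subtype
    have hDfin : ((fpe.dom : L₀.Substructure M) : Set M).Finite :=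
      finite_of_substructure_fg hF0 hfg
    haveI hfD : Finite (↥fpe.dom) := hDfin.to_subtype
    have hSK0 : IsK0Struct (↥S) := isK0_of_embedding hMK0 S.subtype
    obtain ⟨f', eq_f'⟩ := key_extension hP0 hage hUH (↥S) hfS hSK0 (↥fpe.dom) hfD
      (Substructure.inclusion dom_le_S)
      ((Substructure.subtype fpe.cod).comp fpe.toEquiv.toEmbedding)
    refine ⟨⟨⟨S, f'.toHom.range, f'.equivRange⟩, S_FG⟩,
      Substructure.subset_closure.trans (le_sup_right : _ ≤ S) (Set.mem_singleton m),
      ⟨dom_le_S, ?_⟩⟩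
    ext x
    simp only [Embedding.comp_apply, Equiv.coe_toEmbedding, Substructure.coe_subtype, eq_f',
      Embedding.equivRange_apply, Substructure.coe_inclusion, EmbeddingLike.apply_eq_iff_eq]
    rfl
  -- conclude via uniqueness of Fraïssé limits
  haveI : Countable ((l : ℕ) × L₀.Functions l) := by
    haveI : IsEmpty ((l : ℕ) × L₀.Functions l) := ⟨fun x => x.2.elim⟩
    infer_instance
  have hlim : IsFraisseLimit K₀ M := ⟨hUH0, hage0⟩
  have hlim0 : IsFraisseLimit K₀ M₀ := ⟨hUH₀, hage₀⟩
  exact ⟨hUH0, hage0, hlim.nonempty_equiv hlim0⟩
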